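/- Let A be a totally unimodular matrix of rank r with columns a_1,...,a_m, and suppose that every signed circuit C = C^+ ⊔ C^- satisfies |C^+| = |C^-| (the represented oriented matroid is co-Eulerian). Then the root polytope conv{a_1,...,a_m} has affine dimension r - 1. -/

import Mathlib

open Finset

def Matrix.ColDep {m n : Type*} (A : Matrix m n ℝ) (S : Finset n) : Prop :=
  ¬ LinearIndependent ℝ (fun i : S => A.transpose i.1)

def Matrix.IsCircuit {m n : Type*} (A : Matrix m n ℝ) (C : Finset n) : Prop :=
  A.ColDep C ∧ ∀ S ⊂ C, ¬ A.ColDep S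

/-- A signed circuit: a circuit `C⁺ ⊔ C⁻` with `∑_{i∈C⁺} a_i - ∑_{i∈C⁻} a_i = 0`. -/
def Matrix.IsSignedCircuit {m n : Type*} [Fintype m] [DecidableEq n]
    (A : Matrix m n ℝ) (Cp Cm : Finset n) : Prop :=
  Disjoint Cp Cm ∧ A.IsCircuit (Cp ∪ Cm) ∧
    (∑ i ∈ Cp, A.transpose i) - (∑ i ∈ Cm, A.transpose i) = 0

open Matrix
set_option linter.unusedSectionVars false
set_option linter.unusedVariables false
set_option maxHeartbeats 1000000

section Aux
variable {k n : Type*} [Fintype k] [Fintype n] [DecidableEq n]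

lemma colDep_iff (A : Matrix k n ℝ) (S : Finset n) :
    A.ColDep S ↔ ∃ d : n → ℝ, A *ᵥ d = 0 ∧ (∀ i ∉ S, d i = 0) ∧ d ≠ 0 := by
  unfold Matrix.ColDep
  rw [Fintype.not_linearIndependent_iff]
  constructor
  · rintro ⟨g, hg, i0, hi0⟩
    classical
    refine ⟨fun i => if h : i ∈ S then g ⟨i, h⟩ else 0, ?_, ?_, ?_⟩
    · funext a
      have := congrFun hg a
      simp only [Finset.sum_apply, Pi.smul_apply, Pi.zero_apply, smul_eq_mul] at this
      simp only [Matrix.mulVec, dotProduct, Pi.zero_apply]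
      rw [← Finset.sum_subset (Finset.subset_univ S) (by intro x _ hx; simp [hx])]
      rw [← Finset.sum_attach S (fun i => A a i * (if h : i ∈ S then g ⟨i, h⟩ else 0))]
      rw [← this]
      refine Finset.sum_congr rfl fun i _ => ?_
      simp [i.2, Matrix.transpose, mul_comm]
    · intro i hi; simp [hi]
    · intro h
      apply hi0
      have := congrFun h i0.1
      simpa [i0.2] using this
  · rintro ⟨d, hd, hs, hne⟩
    refine ⟨fun i => d i.1, ?_, ?_⟩
    · funext a
      simp only [Finset.sum_apply, Pi.smul_apply, Pi.zero_apply, smul_eq_mul]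
      have := congrFun hd a
      simp only [Matrix.mulVec, dotProduct, Pi.zero_apply] at this
      rw [← this, ← Finset.sum_subset (Finset.subset_univ S) (by intro x _ hx; simp [hs x hx])]
      rw [← Finset.sum_attach S (fun i => A a i * d i)]
      refine Finset.sum_congr rfl fun i _ => ?_
      simp [Matrix.transpose, mul_comm]
    · obtain ⟨i, hi⟩ := Function.ne_iff.mp hne
      have hiS : i ∈ S := by by_contra h; exact hi (hs i h)
      exact ⟨⟨i, hiS⟩, hi⟩

lemma exists_circuit_subset (A : Matrix k n ℝ) :
    ∀ S : Finset n, A.ColDep S → ∃ C ⊆ S, A.IsCircuit C := by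
  intro S
  induction S using Finset.strongInductionOn with
  | _ S ih =>
    intro hS
    by_cases h : ∀ T ⊂ S, ¬ A.ColDep T
    · exact ⟨S, subset_rfl, hS, h⟩
    · push_neg at h
      obtain ⟨T, hTS, hT⟩ := h
      obtain ⟨C, hCT, hC⟩ := ih T hTS hT
      exact ⟨C, hCT.trans hTS.subset, hC⟩

/-- Row selection: if `w : κ → ℝᵗ` spans, we can pick `t` indices whose vectors form a basis. -/
lemma exists_rows_isUnit {t : ℕ} {κ : Type*} [Fintype κ] (w : κ → (Fin t → ℝ))
    (hw : Submodule.span ℝ (Set.range w) = ⊤) :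
    ∃ ρ : Fin t → κ, IsUnit (Matrix.of (fun a b => w (ρ a) b)) := by
  classical
  obtain ⟨s, hs_sub, hs_span, hs_li⟩ := exists_linearIndependent ℝ (Set.range w)
  rw [hw] at hs_span
  have hfin : s.Finite := hs_li.setFinite
  haveI : Fintype s := hfin.fintype
  let b : Module.Basis s ℝ (Fin t → ℝ) := Module.Basis.mk hs_li (by rw [Subtype.range_coe_subtype, Set.setOf_mem_eq, hs_span])
  have hcard : Fintype.card s = t := by
    have := Module.finrank_eq_card_basis b
    simpa [Module.finrank_fin_fun] using this.symm
  let e : Fin t ≃ s := (Fintype.equivFinOfCardEq hcard).symm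
  have hmem : ∀ a : Fin t, (e a : Fin t → ℝ) ∈ Set.range w := fun a => hs_sub (e a).2
  choose ρ hρ using fun a => hmem a
  refine ⟨ρ, ?_⟩
  rw [← Matrix.linearIndependent_rows_iff_isUnit]
  have : (fun a : Fin t => (Matrix.of (fun a b => w (ρ a) b)) a) = fun a => (b.reindex e.symm) a := by
    funext a
    have : Matrix.of (fun a b => w (ρ a) b) a = w (ρ a) := rfl
    rw [this, hρ a, Module.Basis.reindex_apply, Equiv.symm_symm, Module.Basis.mk_apply]
  change LinearIndependent ℝ (fun a : Fin t => (Matrix.of (fun a b => w (ρ a) b)) a)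
  rw [this]
  exact (b.reindex e.symm).linearIndependent

lemma sign_cases {x : ℝ} (h : x ∈ Set.range (SignType.cast : SignType → ℝ)) :
    x = 0 ∨ x = 1 ∨ x = -1 := by
  obtain ⟨s, rfl⟩ := h; cases s <;> simp

lemma tu_circuit_vector (A : Matrix k n ℝ) (hA : A.IsTotallyUnimodular) (C : Finset n)
    (hC : A.IsCircuit C) :
    ∃ z : n → ℝ, A *ᵥ z = 0 ∧ (∀ i ∈ C, z i = 1 ∨ z i = -1) ∧ (∀ i ∉ C, z i = 0) := by
  classical
  obtain ⟨d, hd0, hdsupp, hdne⟩ := (colDep_iff A C).mp hC.1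
  -- every coordinate of `d` on `C` is nonzero
  have hdC : ∀ i ∈ C, d i ≠ 0 := by
    intro i hi hdi
    refine hC.2 (C.erase i) (Finset.erase_ssubset hi) ?_
    refine (colDep_iff A _).mpr ⟨d, hd0, ?_, hdne⟩
    intro x hx
    rw [Finset.mem_erase, not_and_or] at hx
    rcases hx with h | h
    · push_neg at h; subst h; exact hdi
    · exact hdsupp x h
  obtain ⟨j, hjne0⟩ := Function.ne_iff.mp hdne
  have hjne : d j ≠ 0 := hjne0
  have hj : j ∈ C := by by_contra h; exact hjne (hdsupp j h)
  set z : n → ℝ := (d j)⁻¹ • d with hzdef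
  have hzj : z j = 1 := by simp [hzdef, inv_mul_cancel₀ hjne]
  have hz0 : A *ᵥ z = 0 := by rw [hzdef, Matrix.mulVec_smul, hd0, smul_zero]
  have hzsupp : ∀ i ∉ C, z i = 0 := fun i hi => by simp [hzdef, hdsupp i hi]
  have hzC : ∀ i ∈ C, z i ≠ 0 := fun i hi =>
    mul_ne_zero (inv_ne_zero hjne) (hdC i hi)
  refine ⟨z, hz0, ?_, hzsupp⟩
  -- setup for the Cramer argument
  set C' : Finset n := C.erase j with hC'def
  set t : ℕ := C'.card with htdef
  set eC : Fin t ≃ {x // x ∈ C'} := C'.equivFin.symm with heC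
  have hv : LinearIndependent ℝ (fun b : Fin t => A.transpose (eC b).1) := by
    have hli : LinearIndependent ℝ (fun i : C' => A.transpose i.1) :=
      not_not.mp (hC.2 C' (Finset.erase_ssubset hj))
    exact hli.comp eC eC.injective
  set N : Matrix k (Fin t) ℝ := Matrix.of (fun a b => A a (eC b).1) with hN
  have hNt : Nᵀ.rank = t := by
    have : LinearIndependent ℝ Nᵀ.row := hv
    simpa using this.rank_matrix
  have hNrank : N.rank = t := by rw [← Matrix.rank_transpose, hNt]
  have htop : Submodule.span ℝ (Set.range (fun a : k => (fun b => A a (eC b).1))) = ⊤ := by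
    apply Submodule.eq_top_of_finrank_eq
    have h1 := (Matrix.rank_eq_finrank_span_row N).symm
    have h2 : Set.range N.row = Set.range (fun a : k => (fun b => A a (eC b).1)) := rfl
    rw [h2] at h1
    rw [h1, hNrank, Module.finrank_fin_fun]
  obtain ⟨ρ, hMunit⟩ := exists_rows_isUnit _ htop
  set M : Matrix (Fin t) (Fin t) ℝ :=
    Matrix.of (fun a b => A (ρ a) (eC b).1) with hM
  have hMunit' : IsUnit M := hMunit
  have hMdet : M.det = 1 ∨ M.det = -1 := by
    have h1 : M.det ∈ Set.range (SignType.cast : SignType → ℝ) := by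
      have := (Matrix.isTotallyUnimodular_iff A).mp hA t ρ (fun b => (eC b).1)
      exact this
    have h2 : IsUnit M.det := (Matrix.isUnit_iff_isUnit_det M).mp hMunit'
    rcases sign_cases h1 with h | h | h
    · rw [h] at h2; simp at h2
    · exact Or.inl h
    · exact Or.inr h
  set lam : Fin t → ℝ := fun b => z (eC b).1 with hlam
  set bb : Fin t → ℝ := fun a => -A (ρ a) j with hbb
  have hMlam : M *ᵥ lam = bb := by
    funext a
    have hrow : ∑ i, A (ρ a) i * z i = 0 := congrFun hz0 (ρ a)
    have hCsum : ∑ i ∈ C, A (ρ a) i * z i = 0 := by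
      rw [← hrow]
      apply Finset.sum_subset (Finset.subset_univ C)
      intro x _ hx
      rw [hzsupp x hx, mul_zero]
    have hsplit : ∑ i ∈ C', A (ρ a) i * z i + A (ρ a) j * z j = 0 := by
      rw [hC'def, Finset.sum_erase_add _ _ hj]; exact hCsum
    have hequiv : (M *ᵥ lam) a = ∑ i ∈ C', A (ρ a) i * z i := by
      show ∑ b : Fin t, A (ρ a) (eC b).1 * z (eC b).1 = _
      rw [← Finset.sum_attach C' (fun i => A (ρ a) i * z i)]
      exact Equiv.sum_comp eC (fun i : C' => A (ρ a) i.1 * z i.1)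
    rw [hequiv]
    have := hsplit
    rw [hzj, mul_one] at this
    simp [hbb]; linarith
  have hcram : M.det • lam = Matrix.cramer M bb := by
    apply (Matrix.mulVec_injective_iff_isUnit.mpr hMunit')
    rw [Matrix.mulVec_cramer, Matrix.mulVec_smul, hMlam]
  have hcramtu : ∀ a : Fin t, Matrix.cramer M bb a = 0 ∨
      Matrix.cramer M bb a = 1 ∨ Matrix.cramer M bb a = -1 := by
    intro a
    rw [Matrix.cramer_apply]
    have hbb' : bb = (-1 : ℝ) • (fun x => A (ρ x) j) := by
      funext x; simp [hbb]
    rw [hbb', Matrix.det_updateCol_smul]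
    have hupd : M.updateCol a (fun x => A (ρ x) j) =
        A.submatrix ρ (fun y => if y = a then j else (eC y).1) := by
      ext i y
      rw [Matrix.updateCol_apply, Matrix.submatrix_apply]
      split_ifs <;> rfl
    rw [hupd]
    have := (Matrix.isTotallyUnimodular_iff A).mp hA t ρ (fun y => if y = a then j else (eC y).1)
    rcases sign_cases this with h | h | h <;> rw [h] <;> norm_num
  intro i hi
  rcases eq_or_ne i j with rfl | hij
  · exact Or.inl hzj
  · have hiC' : i ∈ C' := Finset.mem_erase.mpr ⟨hij, hi⟩
    set b : Fin t := eC.symm ⟨i, hiC'⟩ with hb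
    have hzb : z i = lam b := by
      simp [hlam, hb, Equiv.apply_symm_apply]
    have heq : M.det * lam b = Matrix.cramer M bb b := by
      have := congrFun hcram b
      simpa using this
    have hne : lam b ≠ 0 := by rw [← hzb]; exact hzC i hi
    rw [hzb]
    rcases hMdet with hd | hd <;> rcases hcramtu b with h | h | h <;>
      rw [hd, h] at heq <;> first | (exfalso; apply hne; linarith) | (left; linarith) |
        (right; linarith)

/-- Under the co-Eulerian hypothesis, the circuit vector has coordinate sum zero. -/
lemma circuit_vector_sum_zero (A : Matrix k n ℝ) (hA : A.IsTotallyUnimodular)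
    (hco : ∀ Cp Cm : Finset n, A.IsSignedCircuit Cp Cm → Cp.card = Cm.card)
    (C : Finset n) (hC : A.IsCircuit C) {z : n → ℝ} (hz0 : A *ᵥ z = 0)
    (hzC : ∀ i ∈ C, z i = 1 ∨ z i = -1) (hzs : ∀ i ∉ C, z i = 0) :
    ∑ i, z i = 0 := by
  classical
  set Cp : Finset n := C.filter (fun i => z i = 1) with hCp
  set Cm : Finset n := C.filter (fun i => z i = -1) with hCm
  have hdisj : Disjoint Cp Cm := by
    rw [Finset.disjoint_left]
    intro i hip him
    have h1 : z i = 1 := (Finset.mem_filter.mp hip).2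
    have h2 : z i = -1 := (Finset.mem_filter.mp him).2
    rw [h1] at h2; norm_num at h2
  have hunion : Cp ∪ Cm = C := by
    ext i
    constructor
    · intro hi
      rcases Finset.mem_union.mp hi with h | h
      · exact (Finset.mem_filter.mp h).1
      · exact (Finset.mem_filter.mp h).1
    · intro hi
      rcases hzC i hi with h | h
      · exact Finset.mem_union_left _ (Finset.mem_filter.mpr ⟨hi, h⟩)
      · exact Finset.mem_union_right _ (Finset.mem_filter.mpr ⟨hi, h⟩)
  have hsum : (∑ i ∈ Cp, A.transpose i) - (∑ i ∈ Cm, A.transpose i) = 0 := by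
    funext a
    have hrow : ∑ i, A a i * z i = 0 := congrFun hz0 a
    have hCsum : ∑ i ∈ C, A a i * z i = 0 := by
      rw [← hrow]
      apply Finset.sum_subset (Finset.subset_univ C)
      intro x _ hx
      rw [hzs x hx, mul_zero]
    rw [← hunion, Finset.sum_union hdisj] at hCsum
    have h1 : ∑ i ∈ Cp, A a i * z i = ∑ i ∈ Cp, A a i :=
      Finset.sum_congr rfl fun i hi => by rw [(Finset.mem_filter.mp hi).2, mul_one]
    have h2 : ∑ i ∈ Cm, A a i * z i = -∑ i ∈ Cm, A a i := by
      rw [← Finset.sum_neg_distrib]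
      exact Finset.sum_congr rfl fun i hi => by
        rw [(Finset.mem_filter.mp hi).2]; ring
    rw [h1, h2] at hCsum
    simp only [Pi.sub_apply, Pi.zero_apply, Finset.sum_apply, Matrix.transpose_apply]
    have e : ∀ s : Finset n, (∑ i ∈ s, A.transpose i) a = ∑ i ∈ s, A a i := fun s =>
      Finset.sum_apply a s (fun i => (A.transpose i : k → ℝ))
    rw [e Cp, e Cm]
    linarith
  have hcard : Cp.card = Cm.card := by
    apply hco
    refine ⟨hdisj, ?_, hsum⟩
    rw [hunion]; exact hC
  have : ∑ i, z i = ∑ i ∈ C, z i := by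
    symm
    apply Finset.sum_subset (Finset.subset_univ C)
    intro x _ hx; exact hzs x hx
  rw [this, ← hunion, Finset.sum_union hdisj]
  have h1 : ∑ i ∈ Cp, z i = Cp.card := by
    rw [Finset.sum_congr rfl fun i hi => (Finset.mem_filter.mp hi).2]
    simp [hCp]
  have h2 : ∑ i ∈ Cm, z i = -(Cm.card : ℝ) := by
    rw [Finset.sum_congr rfl fun i hi => (Finset.mem_filter.mp hi).2]
    simp [hCm]
  rw [h1, h2, hcard]; ring

/-- Every kernel vector of `A` has coordinate sum zero. -/
lemma kernel_sum_zero (A : Matrix k n ℝ) (hA : A.IsTotallyUnimodular)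
    (hco : ∀ Cp Cm : Finset n, A.IsSignedCircuit Cp Cm → Cp.card = Cm.card) :
    ∀ c : n → ℝ, A *ᵥ c = 0 → ∑ i, c i = 0 := by
  classical
  suffices h : ∀ N : ℕ, ∀ c : n → ℝ, (Finset.univ.filter (fun i => c i ≠ 0)).card ≤ N →
      A *ᵥ c = 0 → ∑ i, c i = 0 by
    intro c hc
    exact h (Finset.univ.filter (fun i => c i ≠ 0)).card c le_rfl hc
  intro N
  induction N with
  | zero =>
    intro c hcard _
    have : ∀ i, c i = 0 := by
      intro i
      by_contra h
      have : i ∈ Finset.univ.filter (fun i => c i ≠ 0) := by simp [h]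
      have := Finset.card_pos.mpr ⟨i, this⟩
      omega
    simp [this]
  | succ N ih =>
    intro c hcard hc
    by_cases hzero : ∀ i, c i = 0
    · simp [hzero]
    · push_neg at hzero
      set S : Finset n := Finset.univ.filter (fun i => c i ≠ 0) with hS
      have hdep : A.ColDep S := by
        rw [colDep_iff]
        refine ⟨c, hc, ?_, ?_⟩
        · intro i hi
          by_contra h
          exact hi (by simp [hS, h])
        · obtain ⟨i, hi⟩ := hzero
          intro h; exact hi (congrFun h i)
      obtain ⟨C, hCS, hC⟩ := exists_circuit_subset A S hdep
      obtain ⟨z, hz0, hzC, hzs⟩ := tu_circuit_vector A hA C hC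
      have hzsum : ∑ i, z i = 0 := circuit_vector_sum_zero A hA hco C hC hz0 hzC hzs
      -- C is nonempty
      have hCne : C.Nonempty := by
        rcases Finset.eq_empty_or_nonempty C with rfl | h
        · exfalso
          apply hC.1
          haveI : IsEmpty ((∅ : Finset n) : Finset n) :=
            ⟨fun i => Finset.notMem_empty i.1 i.2⟩
          exact linearIndependent_empty_type
        · exact h
      obtain ⟨j, hjC⟩ := hCne
      have hzj : z j ≠ 0 := by
        rcases hzC j hjC with h | h <;> rw [h] <;> norm_num
      set c' : n → ℝ := c - (c j / z j) • z with hc'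
      have hc'0 : A *ᵥ c' = 0 := by
        rw [hc', Matrix.mulVec_sub, Matrix.mulVec_smul, hc, hz0, smul_zero, sub_zero]
      have hc'j : c' j = 0 := by
        simp [hc', div_mul_cancel₀ _ hzj]
      have hsub : Finset.univ.filter (fun i => c' i ≠ 0) ⊆ S.erase j := by
        intro i hi
        rw [Finset.mem_filter] at hi
        rw [Finset.mem_erase]
        constructor
        · rintro rfl; exact hi.2 hc'j
        · by_contra h
          apply hi.2
          have hci : c i = 0 := by
            by_contra h'; exact h (by simp [hS, h'])
          have hzi : z i = 0 := by
            apply hzs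
            intro hiC
            exact h (hCS hiC)
          simp [hc', hci, hzi]
      have hjS : j ∈ S := hCS hjC
      have hcard' : (Finset.univ.filter (fun i => c' i ≠ 0)).card ≤ N := by
        have h1 := Finset.card_le_card hsub
        have h2 : (S.erase j).card = S.card - 1 := Finset.card_erase_of_mem hjS
        have h3 : S.card ≥ 1 := Finset.card_pos.mpr ⟨j, hjS⟩
        omega
      have := ih c' hcard' hc'0
      have hsum' : ∑ i, c' i = ∑ i, c i - (c j / z j) * ∑ i, z i := by
        simp [hc', Finset.sum_sub_distrib, Finset.mul_sum]
      rw [hsum', hzsum, mul_zero, sub_zero] at this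
      exact this

end Aux

/-- If `A` is totally unimodular of rank `r` and every signed circuit
`C = C⁺ ⊔ C⁻` satisfies `|C⁺| = |C⁻|` (the represented oriented matroid is co-Eulerian),
then the root polytope `conv{a_1,…,a_m}` has affine dimension `r - 1`. -/
theorem root_polytope_dim_of_coEulerian
    {k n : Type*} [Fintype k] [Fintype n] [DecidableEq n]
    (A : Matrix k n ℝ) (hA : A.IsTotallyUnimodular) (r : ℕ) (hr : A.rank = r)
    (hco : ∀ Cp Cm : Finset n, A.IsSignedCircuit Cp Cm → Cp.card = Cm.card) :
    Module.finrank ℝ (affineSpan ℝ (Set.range A.transpose)).direction = r - 1 := by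
  have K : ∀ c : n → ℝ, A *ᵥ c = 0 → ∑ i, c i = 0 := kernel_sum_zero A hA hco
  classical
  rw [direction_affineSpan]
  cases isEmpty_or_nonempty n with
  | inl h =>
    have h1 : Set.range A.transpose = ∅ := Set.range_eq_empty _
    have h2 : A.rank = 0 := le_antisymm (by simpa using A.rank_le_card_width) (Nat.zero_le _)
    rw [h1, vectorSpan_empty]
    rw [h2] at hr
    simp [← hr]
  | inr hn =>
    by_cases hr0 : r = 0
    · subst hr0
      -- all columns are zero
      have hspan : Submodule.span ℝ (Set.range A.transpose) = ⊥ := by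
        rw [← Submodule.finrank_eq_zero (R := ℝ)]
        rw [show Set.range A.transpose = Set.range A.col from rfl, ← Matrix.rank_eq_finrank_span_cols, hr]
      have hcols : ∀ i, A.transpose i = 0 := by
        intro i
        have : A.transpose i ∈ Submodule.span ℝ (Set.range A.transpose) :=
          Submodule.subset_span ⟨i, rfl⟩
        rwa [hspan, Submodule.mem_bot] at this
      have hrange : Set.range A.transpose = {0} := by
        apply Set.eq_singleton_iff_nonempty_unique_mem.mpr
        exact ⟨⟨A.transpose hn.some, hn.some, rfl⟩, by rintro x ⟨i, rfl⟩; exact hcols i⟩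
      rw [hrange, vectorSpan_singleton]
      simp
    · set j0 : n := hn.some with hj0
      set a0 : k → ℝ := A.transpose j0 with ha0def
      set D : Submodule ℝ (k → ℝ) := vectorSpan ℝ (Set.range A.transpose) with hD
      set W : Submodule ℝ (k → ℝ) := Submodule.span ℝ (Set.range A.transpose) with hWdef
      have hW : Module.finrank ℝ W = r := by
        rw [hWdef, show Set.range A.transpose = Set.range A.col from rfl, ← Matrix.rank_eq_finrank_span_cols, hr]
      have hsingle : ∀ i : n, A *ᵥ Pi.single i 1 = A.transpose i := by
        intro i
        funext a
        simp [Matrix.mulVec, dotProduct, Pi.single_apply, mul_ite]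
      -- every element of D is A *ᵥ c with ∑ c = 0
      have hDU : ∀ x ∈ D, ∃ c : n → ℝ, ∑ i, c i = 0 ∧ A *ᵥ c = x := by
        intro x hx
        set f : (n → ℝ) →ₗ[ℝ] ℝ := ∑ i : n, LinearMap.proj i with hf
        have hfapp : ∀ c : n → ℝ, f c = ∑ i, c i := by
          intro c; simp [hf]
        have hle : D ≤ (LinearMap.ker f).map A.mulVecLin := by
          rw [hD, vectorSpan_def]
          apply Submodule.span_le.mpr
          rintro y ⟨p, hp, q, hq, rfl⟩
          obtain ⟨i, rfl⟩ := hp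
          obtain ⟨i', rfl⟩ := hq
          refine ⟨Pi.single i 1 - Pi.single i' 1, ?_, ?_⟩
          · show Pi.single i 1 - Pi.single i' 1 ∈ LinearMap.ker f
            rw [LinearMap.mem_ker, hfapp]
            simp [Pi.single_apply, Finset.sum_sub_distrib]
          · rw [Matrix.mulVecLin_apply, Matrix.mulVec_sub, hsingle, hsingle]
            rfl
        obtain ⟨c, hc1, hc2⟩ := hle hx
        exact ⟨c, by rw [← hfapp]; exact hc1, by rwa [Matrix.mulVecLin_apply] at hc2⟩
      have ha0 : a0 ∉ D := by
        intro h
        obtain ⟨c, hc1, hc2⟩ := hDU a0 h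
        have h0 : A *ᵥ (c - Pi.single j0 1) = 0 := by
          rw [Matrix.mulVec_sub, hc2, hsingle, ha0def, sub_self]
        have := K _ h0
        simp only [Pi.sub_apply] at this
        rw [Finset.sum_sub_distrib, hc1] at this
        simp [Pi.single_apply] at this
      have ha0ne : a0 ≠ 0 := fun h => ha0 (h ▸ D.zero_mem)
      have hsup : D ⊔ (ℝ ∙ a0) = W := by
        apply le_antisymm
        · apply sup_le
          · rw [hD, vectorSpan_def]
            apply Submodule.span_le.mpr
            rintro y ⟨p, hp, q, hq, rfl⟩
            exact Submodule.sub_mem _ (Submodule.subset_span hp) (Submodule.subset_span hq)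
          · rw [Submodule.span_le, Set.singleton_subset_iff]
            exact Submodule.subset_span ⟨j0, rfl⟩
        · apply Submodule.span_le.mpr
          rintro y ⟨i, rfl⟩
          have h1 : A.transpose i - a0 ∈ D :=
            vsub_mem_vectorSpan ℝ ⟨i, rfl⟩ ⟨j0, rfl⟩
          have h2 : a0 ∈ (ℝ ∙ a0) := Submodule.mem_span_singleton_self a0
          have := Submodule.add_mem (D ⊔ (ℝ ∙ a0))
            (Submodule.mem_sup_left h1) (Submodule.mem_sup_right h2)
          simpa using this
      have hinf : D ⊓ (ℝ ∙ a0) = ⊥ := by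
        rw [eq_bot_iff]
        rintro x ⟨hxD, hxs⟩
        obtain ⟨t, rfl⟩ := Submodule.mem_span_singleton.mp hxs
        rcases eq_or_ne t 0 with rfl | ht
        · simp
        · exfalso
          apply ha0
          have := D.smul_mem t⁻¹ hxD
          rwa [smul_smul, inv_mul_cancel₀ ht, one_smul] at this
      have hformula := Submodule.finrank_sup_add_finrank_inf_eq D (ℝ ∙ a0)
      rw [hsup, hinf, hW, finrank_span_singleton ha0ne, finrank_bot] at hformula
      omega
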